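/- For all positive integers k < n and every nonempty subset G of the vertex set of the shift graph Sh_n^k, the independence number satisfies α(Sh_n^k[G]) ≥ (1/2 − 1/k)·|G|; that is, α_n^k ≥ 1/2 − 1/k. -/

import Mathlib

/-- `y` is the "shift" of `x`: `x_i = y_{i+1}` for all `i ∈ {1,…,k-1}`. -/
def shiftRel (k : ℕ) (x y : Fin k → ℕ) : Prop :=
  ∀ i j : Fin k, (j : ℕ) = (i : ℕ) + 1 → x i = y j

/-- Adjacency in the shift graph `Sh_n^k`. -/
def shAdjK (k : ℕ) (x y : Fin k → ℕ) : Prop :=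
  x ≠ y ∧ (shiftRel k x y ∨ shiftRel k y x)

/-- `x` is a vertex of `Sh_n^k`: an increasing `k`-tuple with entries in `{1,…,n}`. -/
def isVertK (n k : ℕ) (x : Fin k → ℕ) : Prop :=
  StrictMono x ∧ ∀ i, 1 ≤ x i ∧ x i ≤ n

open Classical in
/-- The independence number of the subgraph of `Sh_n^k` induced on `G`. -/
noncomputable def indepNumK (k : ℕ) (G : Finset (Fin k → ℕ)) : ℕ :=
  (G.powerset.filter fun I => ∀ x ∈ I, ∀ y ∈ I, ¬ shAdjK k x y).sup Finset.card

/-- `α_n^k`: the minimum of `α(Sh_n^k[G])/|G|` over nonempty `G ⊆ V(Sh_n^k)`. -/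
noncomputable def alphaNK (n k : ℕ) : ℝ :=
  sInf {r : ℝ | ∃ G : Finset (Fin k → ℕ), G.Nonempty ∧ (∀ x ∈ G, isVertK n k x) ∧
    r = (indepNumK k G : ℝ) / G.card}

/-! ### Auxiliary development -/

open Classical

namespace ShiftAux

/-- Priority of a value `t` under the permutation `σ`. -/
noncomputable def prio (n : ℕ) (σ : Equiv.Perm (Fin (n+1))) (t : ℕ) : ℕ :=
  if h : t < n + 1 then (σ ⟨t, h⟩ : ℕ) else t

lemma prio_inj {n : ℕ} (σ : Equiv.Perm (Fin (n+1))) {s t : ℕ}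
    (hs : s < n + 1) (ht : t < n + 1) (h : prio n σ s = prio n σ t) : s = t := by
  simp only [prio, dif_pos hs, dif_pos ht] at h
  have h2 : σ ⟨s, hs⟩ = σ ⟨t, ht⟩ := Fin.ext h
  have h3 := σ.injective h2
  exact congrArg Fin.val h3

/-- `j` is the position of the (strict) minimum priority among the entries of `x`. -/
def IsAm (n k : ℕ) (σ : Equiv.Perm (Fin (n+1))) (x : Fin k → ℕ) (j : Fin k) : Prop :=
  ∀ i : Fin k, i ≠ j → prio n σ (x j) < prio n σ (x i)

lemma exists_am {n k : ℕ} (hk : 0 < k) (σ : Equiv.Perm (Fin (n+1))) {x : Fin k → ℕ}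
    (hinj : Function.Injective x) (hb : ∀ i, x i ≤ n) :
    ∃ j, IsAm n k σ x j := by
  obtain ⟨j, -, hj⟩ := Finset.exists_min_image Finset.univ (fun i => prio n σ (x i))
    ⟨⟨0, hk⟩, Finset.mem_univ _⟩
  refine ⟨j, fun i hi => ?_⟩
  have hle := hj i (Finset.mem_univ _)
  rcases lt_or_eq_of_le hle with h | h
  · exact h
  · exfalso
    have := prio_inj σ (Nat.lt_succ_of_le (hb j)) (Nat.lt_succ_of_le (hb i)) h
    exact hi (hinj this).symm

lemma am_unique {n k : ℕ} {σ : Equiv.Perm (Fin (n+1))} {x : Fin k → ℕ} {j j' : Fin k}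
    (h : IsAm n k σ x j) (h' : IsAm n k σ x j') : j = j' := by
  by_contra hne
  exact absurd (h j' (fun he => hne he.symm)) (not_lt.mpr (le_of_lt (h' j hne)))

/-- The argmin position. -/
noncomputable def amin (n k : ℕ) (hk : 0 < k) (σ : Equiv.Perm (Fin (n+1)))
    (x : Fin k → ℕ) : Fin k :=
  if h : ∃ j, IsAm n k σ x j then h.choose else ⟨0, hk⟩

lemma amin_isAm {n k : ℕ} (hk : 0 < k) (σ : Equiv.Perm (Fin (n+1))) {x : Fin k → ℕ}
    (hinj : Function.Injective x) (hb : ∀ i, x i ≤ n) :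
    IsAm n k σ x (amin n k hk σ x) := by
  have h := exists_am hk σ hinj hb
  rw [amin, dif_pos h]
  exact h.choose_spec

lemma amin_eq_iff {n k : ℕ} (hk : 0 < k) (σ : Equiv.Perm (Fin (n+1))) {x : Fin k → ℕ}
    (hinj : Function.Injective x) (hb : ∀ i, x i ≤ n) {j : Fin k} :
    amin n k hk σ x = j ↔ IsAm n k σ x j := by
  constructor
  · rintro rfl; exact amin_isAm hk σ hinj hb
  · intro h; exact am_unique (amin_isAm hk σ hinj hb) h

/-- The "good" vertices: argmin position odd and not in the last position-slot. -/
def goodP (n k : ℕ) (σ : Equiv.Perm (Fin (n+1))) (x : Fin k → ℕ) : Prop :=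
  ∃ j : Fin k, IsAm n k σ x j ∧ (j : ℕ) % 2 = 1 ∧ (j : ℕ) + 1 < k

/-- Set of good positions. -/
def Sg (k : ℕ) : Finset (Fin k) :=
  Finset.univ.filter (fun j : Fin k => (j : ℕ) % 2 = 1 ∧ (j : ℕ) + 1 < k)

lemma goodP_iff_amin {n k : ℕ} (hk : 0 < k) (σ : Equiv.Perm (Fin (n+1))) {x : Fin k → ℕ}
    (hinj : Function.Injective x) (hb : ∀ i, x i ≤ n) :
    goodP n k σ x ↔ amin n k hk σ x ∈ Sg k := by
  constructor
  · rintro ⟨j, hj, h1, h2⟩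
    have := (amin_eq_iff hk σ hinj hb).mpr hj
    rw [this, Sg, Finset.mem_filter]
    exact ⟨Finset.mem_univ _, h1, h2⟩
  · intro h
    rw [Sg, Finset.mem_filter] at h
    exact ⟨amin n k hk σ x, amin_isAm hk σ hinj hb, h.2.1, h.2.2⟩

/-! ### The core independence argument -/

lemma core {n k : ℕ} (σ : Equiv.Perm (Fin (n+1))) {x y : Fin k → ℕ}
    (hx : goodP n k σ x) (hy : goodP n k σ y) (h : shiftRel k x y) : False := by
  obtain ⟨j, hamx, hjodd, hjlt⟩ := hx
  obtain ⟨j', hamy, hj'odd, hj'lt⟩ := hy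
  have hj'1 : 1 ≤ (j' : ℕ) := by omega
  have hi₀lt : (j' : ℕ) - 1 < k := by omega
  set i₀ : Fin k := ⟨(j' : ℕ) - 1, hi₀lt⟩ with hi₀
  have hxy : x i₀ = y j' := h i₀ j' (by simp [hi₀]; omega)
  have key : ∀ t : Fin k, (t : ℕ) + 1 < k → t ≠ i₀ →
      prio n σ (x i₀) < prio n σ (x t) := by
    intro t ht hti
    have hxt : x t = y ⟨(t : ℕ) + 1, ht⟩ := h t ⟨(t : ℕ) + 1, ht⟩ rfl
    rw [hxy, hxt]
    refine hamy ⟨(t : ℕ) + 1, ht⟩ (fun hc => hti ?_)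
    have hcv := congrArg Fin.val hc
    simp at hcv
    apply Fin.ext
    simp [hi₀]
    omega
  have hji : j = i₀ := by
    by_contra hne
    have h1 := hamx i₀ (fun he => hne he.symm)
    have h2 := key j hjlt hne
    omega
  have : (j : ℕ) = (j' : ℕ) - 1 := congrArg Fin.val hji
  omega

lemma not_adj_of_good {n k : ℕ} (σ : Equiv.Perm (Fin (n+1))) {x y : Fin k → ℕ}
    (hx : goodP n k σ x) (hy : goodP n k σ y) : ¬ shAdjK k x y := by
  rintro ⟨-, h | h⟩
  · exact core σ hx hy h
  · exact core σ hy hx h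

/-! ### Counting -/

lemma isAm_mul_swap {n k : ℕ} {x : Fin k → ℕ} (hinj : Function.Injective x)
    (hb : ∀ i, x i ≤ n) {j j' : Fin k} (hjj' : j ≠ j') (σ : Equiv.Perm (Fin (n+1)))
    (h : IsAm n k σ x j) :
    IsAm n k (σ * Equiv.swap ⟨x j, Nat.lt_succ_of_le (hb j)⟩
      ⟨x j', Nat.lt_succ_of_le (hb j')⟩) x j' := by
  have lt : ∀ i, x i < n + 1 := fun i => Nat.lt_succ_of_le (hb i)
  set f : Fin k → Fin (n+1) := fun i => ⟨x i, lt i⟩ with hf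
  have finj : Function.Injective f := fun i i' hii => hinj (congrArg Fin.val hii)
  have hpe : ∀ (τ : Equiv.Perm (Fin (n+1))) (i : Fin k), prio n τ (x i) = ↑(τ (f i)) := by
    intro τ i; rw [prio, dif_pos (lt i)]
  intro i hi
  rw [hpe, hpe]
  simp only [Equiv.Perm.mul_apply]
  show (σ (Equiv.swap (f j) (f j') (f j')) : ℕ) < σ (Equiv.swap (f j) (f j') (f i))
  rw [Equiv.swap_apply_right]
  by_cases hij : i = j
  · subst hij
    rw [Equiv.swap_apply_left]
    have hlt := h j' hjj'.symm
    rw [hpe, hpe] at hlt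
    exact hlt
  · rw [Equiv.swap_apply_of_ne_of_ne (fun he => hij (finj he)) (fun he => hi (finj he))]
    have hlt := h i hij
    rw [hpe, hpe] at hlt
    exact hlt

lemma fiber_card_eq {n k : ℕ} (hk : 0 < k) {x : Fin k → ℕ}
    (hinj : Function.Injective x) (hb : ∀ i, x i ≤ n) (j j' : Fin k) :
    (Finset.univ.filter (fun σ : Equiv.Perm (Fin (n+1)) => amin n k hk σ x = j)).card =
    (Finset.univ.filter (fun σ : Equiv.Perm (Fin (n+1)) => amin n k hk σ x = j')).card := by
  by_cases hjj' : j = j'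
  · rw [hjj']
  · set a : Fin (n+1) := ⟨x j, Nat.lt_succ_of_le (hb j)⟩
    set b : Fin (n+1) := ⟨x j', Nat.lt_succ_of_le (hb j')⟩
    refine Finset.card_bij' (fun σ _ => σ * Equiv.swap a b) (fun σ _ => σ * Equiv.swap a b)
      ?_ ?_ ?_ ?_
    · intro σ hσ
      rw [Finset.mem_filter] at hσ ⊢
      refine ⟨Finset.mem_univ _, ?_⟩
      rw [amin_eq_iff hk _ hinj hb] at hσ ⊢
      exact isAm_mul_swap hinj hb hjj' σ hσ.2
    · intro σ hσ
      rw [Finset.mem_filter] at hσ ⊢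
      refine ⟨Finset.mem_univ _, ?_⟩
      rw [amin_eq_iff hk _ hinj hb] at hσ ⊢
      have := isAm_mul_swap hinj hb (Ne.symm hjj') σ hσ.2
      rwa [Equiv.swap_comm] at this
    · intro σ _
      show σ * Equiv.swap a b * Equiv.swap a b = σ
      rw [mul_assoc, Equiv.swap_mul_self, mul_one]
    · intro σ _
      show σ * Equiv.swap a b * Equiv.swap a b = σ
      rw [mul_assoc, Equiv.swap_mul_self, mul_one]

lemma fiber_total {n k : ℕ} (hk : 0 < k) {x : Fin k → ℕ}
    (hinj : Function.Injective x) (hb : ∀ i, x i ≤ n) (j : Fin k) :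
    (Finset.univ.filter (fun σ : Equiv.Perm (Fin (n+1)) => amin n k hk σ x = j)).card * k =
    (n+1).factorial := by
  have hcard : (Finset.univ : Finset (Equiv.Perm (Fin (n+1)))).card =
      ∑ j' : Fin k, (Finset.univ.filter
        (fun σ : Equiv.Perm (Fin (n+1)) => amin n k hk σ x = j')).card :=
    Finset.card_eq_sum_card_fiberwise (fun σ _ => Finset.mem_univ _)
  have hconst : ∀ j' : Fin k, (Finset.univ.filter
      (fun σ : Equiv.Perm (Fin (n+1)) => amin n k hk σ x = j')).card =
      (Finset.univ.filter (fun σ : Equiv.Perm (Fin (n+1)) => amin n k hk σ x = j)).card :=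
    fun j' => fiber_card_eq hk hinj hb j' j
  rw [Finset.sum_congr rfl (fun j' _ => hconst j'), Finset.sum_const, Finset.card_univ,
    smul_eq_mul] at hcard
  have huniv : Fintype.card (Equiv.Perm (Fin (n+1))) = (n+1).factorial := by
    rw [Fintype.card_perm, Fintype.card_fin]
  rw [Finset.card_univ, Fintype.card_fin, huniv] at hcard
  rw [mul_comm]
  exact hcard.symm

lemma good_count {n k : ℕ} (hk : 0 < k) {x : Fin k → ℕ}
    (hinj : Function.Injective x) (hb : ∀ i, x i ≤ n) :
    (Finset.univ.filter (fun σ : Equiv.Perm (Fin (n+1)) => goodP n k σ x)).card * k =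
    (Sg k).card * (n+1).factorial := by
  have hset : Finset.univ.filter (fun σ : Equiv.Perm (Fin (n+1)) => goodP n k σ x) =
      Finset.univ.filter (fun σ : Equiv.Perm (Fin (n+1)) => amin n k hk σ x ∈ Sg k) := by
    apply Finset.filter_congr
    intro σ _
    simp only [goodP_iff_amin hk σ hinj hb]
  rw [hset]
  have hcard : (Finset.univ.filter
      (fun σ : Equiv.Perm (Fin (n+1)) => amin n k hk σ x ∈ Sg k)).card =
      ∑ j ∈ Sg k, (Finset.univ.filter
        (fun σ : Equiv.Perm (Fin (n+1)) => amin n k hk σ x = j)).card := by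
    rw [Finset.card_eq_sum_card_fiberwise
      (s := Finset.univ.filter (fun σ : Equiv.Perm (Fin (n+1)) => amin n k hk σ x ∈ Sg k))
      (f := fun σ : Equiv.Perm (Fin (n+1)) => amin n k hk σ x) (t := Sg k)
      (fun σ hσ => Finset.mem_coe.mpr (Finset.mem_filter.mp (Finset.mem_coe.mp hσ)).2)]
    refine Finset.sum_congr rfl (fun j hj => ?_)
    congr 1
    ext σ
    simp only [Finset.mem_filter, Finset.mem_univ, true_and]
    constructor
    · rintro ⟨-, hh⟩; exact hh
    · intro hh; exact ⟨hh ▸ hj, hh⟩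
  rw [hcard, Finset.sum_mul,
    Finset.sum_congr rfl (fun j _ => fiber_total hk hinj hb j),
    Finset.sum_const, smul_eq_mul]

lemma odd_count : ∀ m : ℕ, ((Finset.range m).filter (fun j => j % 2 = 1)).card = m / 2 := by
  intro m
  induction m with
  | zero => simp
  | succ m ih =>
    rw [Finset.range_add_one, Finset.filter_insert]
    by_cases h : m % 2 = 1
    · rw [if_pos h, Finset.card_insert_of_notMem (by simp)]
      omega
    · rw [if_neg h]
      omega

lemma sg_card (k : ℕ) : k ≤ 2 * (Sg k).card + 2 := by
  have h1 : (Sg k).card = ((Finset.range k).filter (fun m => m % 2 = 1 ∧ m + 1 < k)).card := by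
    rw [Sg, Finset.card_filter, Finset.card_filter]
    exact Fin.sum_univ_eq_sum_range (fun m => if m % 2 = 1 ∧ m + 1 < k then 1 else 0) k
  have h2 : (Finset.range k).filter (fun m => m % 2 = 1 ∧ m + 1 < k) =
      (Finset.range (k-1)).filter (fun m => m % 2 = 1) := by
    ext m
    simp only [Finset.mem_filter, Finset.mem_range]
    omega
  have h3 := odd_count (k - 1)
  rw [h1, h2, h3]
  omega

lemma indep_card_le {n k : ℕ} (σ : Equiv.Perm (Fin (n+1))) (G : Finset (Fin k → ℕ)) :
    (G.filter (fun x => goodP n k σ x)).card ≤ indepNumK k G := by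
  unfold indepNumK
  rw [Finset.filter_congr_decidable]
  apply Finset.le_sup (f := Finset.card)
  simp only [Finset.mem_filter, Finset.mem_powerset]
  exact ⟨Finset.filter_subset _ _, fun x hx y hy => not_adj_of_good σ hx.2 hy.2⟩

lemma exists_good_sigma {n k : ℕ} (hk : 0 < k) (G : Finset (Fin k → ℕ))
    (hG : ∀ x ∈ G, isVertK n k x) :
    ∃ σ : Equiv.Perm (Fin (n+1)),
      G.card * (Sg k).card ≤ k * (G.filter (fun x => goodP n k σ x)).card := by
  by_contra hcon
  push_neg at hcon
  have key : (∑ σ : Equiv.Perm (Fin (n+1)), (G.filter (fun x => goodP n k σ x)).card) * k =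
      G.card * ((Sg k).card * (n+1).factorial) := by
    have h1 : ∀ σ : Equiv.Perm (Fin (n+1)), (G.filter (fun x => goodP n k σ x)).card =
        ∑ x ∈ G, if goodP n k σ x then 1 else 0 := fun σ => Finset.card_filter _ _
    calc (∑ σ : Equiv.Perm (Fin (n+1)), (G.filter (fun x => goodP n k σ x)).card) * k
        = (∑ σ : Equiv.Perm (Fin (n+1)), ∑ x ∈ G, if goodP n k σ x then 1 else 0) * k := by
          rw [Finset.sum_congr rfl (fun σ _ => h1 σ)]
      _ = (∑ x ∈ G, ∑ σ : Equiv.Perm (Fin (n+1)), if goodP n k σ x then 1 else 0) * k := by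
          rw [Finset.sum_comm]
      _ = (∑ x ∈ G, (Finset.univ.filter
            (fun σ : Equiv.Perm (Fin (n+1)) => goodP n k σ x)).card) * k := by
          rw [Finset.sum_congr rfl (fun x _ => (Finset.card_filter _ _).symm)]
      _ = ∑ x ∈ G, (Finset.univ.filter
            (fun σ : Equiv.Perm (Fin (n+1)) => goodP n k σ x)).card * k := by
          rw [Finset.sum_mul]
      _ = ∑ x ∈ G, (Sg k).card * (n+1).factorial := by
          refine Finset.sum_congr rfl (fun x hx => ?_)
          exact good_count hk ((hG x hx).1.injective) (fun i => ((hG x hx).2 i).2)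
      _ = G.card * ((Sg k).card * (n+1).factorial) := by
          rw [Finset.sum_const, smul_eq_mul]
  have hbound : ∀ σ : Equiv.Perm (Fin (n+1)),
      k * (G.filter (fun x => goodP n k σ x)).card + 1 ≤ G.card * (Sg k).card :=
    fun σ => hcon σ
  have hsum : ∑ σ : Equiv.Perm (Fin (n+1)),
      (k * (G.filter (fun x => goodP n k σ x)).card + 1) ≤
      ∑ _σ : Equiv.Perm (Fin (n+1)), G.card * (Sg k).card :=
    Finset.sum_le_sum (fun σ _ => hbound σ)
  rw [Finset.sum_add_distrib, ← Finset.mul_sum, Finset.sum_const, Finset.sum_const,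
    Finset.card_univ, Fintype.card_perm, Fintype.card_fin, smul_eq_mul, smul_eq_mul,
    mul_one] at hsum
  have hfact : 0 < (n+1).factorial := Nat.factorial_pos _
  have : k * (∑ σ : Equiv.Perm (Fin (n+1)), (G.filter (fun x => goodP n k σ x)).card) =
      G.card * (Sg k).card * (n+1).factorial := by
    rw [mul_comm k, key]; ring
  rw [this] at hsum
  nlinarith [hfact]

end ShiftAux

open ShiftAux in
theorem indepNumK_ge (k n : ℕ) (hk : 0 < k) (hkn : k < n) :
    (∀ G : Finset (Fin k → ℕ), G.Nonempty → (∀ x ∈ G, isVertK n k x) →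
      ((1/2 : ℝ) - 1/(k : ℝ)) * G.card ≤ (indepNumK k G : ℝ)) ∧
    (1/2 : ℝ) - 1/(k : ℝ) ≤ alphaNK n k := by
  have main : ∀ G : Finset (Fin k → ℕ), G.Nonempty → (∀ x ∈ G, isVertK n k x) →
      ((1/2 : ℝ) - 1/(k : ℝ)) * G.card ≤ (indepNumK k G : ℝ) := by
    intro G hGne hGvert
    obtain ⟨σ, hσ⟩ := exists_good_sigma hk G hGvert
    have h2 : G.card * (Sg k).card ≤ k * indepNumK k G :=
      hσ.trans (Nat.mul_le_mul_left k (indep_card_le σ G))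
    have hk0 : (0 : ℝ) < k := by exact_mod_cast hk
    have hcast : (G.card : ℝ) * ((Sg k).card : ℝ) ≤ (k : ℝ) * (indepNumK k G : ℝ) := by
      exact_mod_cast h2
    have hsg : (k : ℝ) ≤ 2 * ((Sg k).card : ℝ) + 2 := by exact_mod_cast sg_card k
    have hG0 : (0 : ℝ) ≤ (G.card : ℝ) := Nat.cast_nonneg _
    rw [← mul_le_mul_iff_of_pos_right hk0]
    have e : ((1:ℝ)/2 - 1/(k:ℝ)) * (G.card : ℝ) * (k : ℝ) =
        (G.card : ℝ) * (k : ℝ) / 2 - (G.card : ℝ) := by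
      field_simp
    rw [e]
    nlinarith [mul_nonneg hG0 (by linarith : (0:ℝ) ≤ 2 * ((Sg k).card : ℝ) + 2 - (k:ℝ))]
  refine ⟨main, ?_⟩
  have hvert : isVertK n k (fun i : Fin k => (i : ℕ) + 1) := by
    refine ⟨fun a b hab => ?_, fun i => ⟨Nat.le_add_left 1 _, ?_⟩⟩
    · show (a : ℕ) + 1 < (b : ℕ) + 1
      have hab' : (a : ℕ) < (b : ℕ) := hab
      omega
    · show (i : ℕ) + 1 ≤ n
      have := i.isLt
      omega
  apply le_csInf
  · refine ⟨(indepNumK k {fun i : Fin k => (i : ℕ) + 1} : ℝ) /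
      ({(fun i : Fin k => (i : ℕ) + 1)} : Finset (Fin k → ℕ)).card, ?_⟩
    refine ⟨{fun i : Fin k => (i : ℕ) + 1}, Finset.singleton_nonempty _, ?_, rfl⟩
    intro x hx
    rw [Finset.mem_singleton] at hx
    subst hx
    exact hvert
  · rintro r ⟨G, hne, hvertG, rfl⟩
    have hcard : (0 : ℝ) < (G.card : ℝ) := by
      exact_mod_cast hne.card_pos
    rw [le_div_iff₀ hcard]
    exact main G hne hvertG
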